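/- Let C be a linear [n,k] code over F_q with parity check matrix H (an (n-k)×n matrix of rank n-k whose row space is the dual code C⊥). Then rank(H·Hᵀ) = n - k - dim(C ∩ C⊥). In particular, rank(H·Hᵀ) is independent of the choice of parity check matrix. -/

import Mathlib

def dualCode {F : Type*} [Field F] {ι : Type*} [Fintype ι]
    (C : Submodule F (ι → F)) : Submodule F (ι → F) where
  carrier := {v | ∀ w ∈ C, ∑ i, v i * w i = 0}
  add_mem' := by
    intro a b ha hb w hw
    simp only [Set.mem_setOf_eq] at *
    simp [Pi.add_apply, add_mul, Finset.sum_add_distrib, ha w hw, hb w hw]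
  zero_mem' := by intro w hw; simp
  smul_mem' := by
    intro c a ha w hw
    simp only [Set.mem_setOf_eq] at *
    simp [Pi.smul_apply, smul_eq_mul, mul_assoc, ← Finset.mul_sum, ha w hw]

theorem stmt0 {F : Type*} [Field F] [Fintype F] {n k : ℕ} (hkn : k ≤ n)
    (C : Submodule F (Fin n → F)) (hC : Module.finrank F C = k)
    (H : Matrix (Fin (n - k)) (Fin n) F)
    (hind : LinearIndependent F (fun i => H i))
    (hspan : Submodule.span F (Set.range (fun i => H i)) = dualCode C) :
    (H * H.transpose).rank = n - k - Module.finrank F ↥(C ⊓ dualCode C) := by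
  classical
  set D := dualCode C with hDdef
  -- pairing characterization of dualCode D
  have pair : ∀ v : Fin n → F, v ∈ dualCode D ↔ ∀ i, ∑ j, v j * H i j = 0 := by
    intro v
    constructor
    · intro hv i
      exact hv (H i) (hspan ▸ Submodule.subset_span ⟨i, rfl⟩)
    · intro hv w hw
      rw [← hspan] at hw
      induction hw using Submodule.span_induction with
      | mem x hx => obtain ⟨i, rfl⟩ := hx; exact hv i
      | zero => simp
      | add x y hx hy ihx ihy =>
          simp [Pi.add_apply, mul_add, Finset.sum_add_distrib, ihx, ihy]
      | smul c x hx ih =>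
          simp [Pi.smul_apply, smul_eq_mul, mul_left_comm, ← Finset.mul_sum, ih]
  have hdker : dualCode D = LinearMap.ker H.mulVecLin := by
    ext v
    rw [pair, LinearMap.mem_ker]
    simp [Matrix.mulVec, dotProduct, funext_iff, mul_comm]
  -- rank of H is n - k
  have hrankH : H.rank = n - k := by
    rw [← Matrix.rank_transpose, Matrix.rank, Matrix.range_mulVecLin]
    change Module.finrank F (Submodule.span F (Set.range H)) = n - k
    have : Set.range H.transpose.transpose = Set.range fun i => H i := rfl
    rw [show (Set.range H : Set (Fin n → F)) = Set.range fun i => H i from rfl]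
    rw [finrank_span_eq_card hind]
    simp
  -- finrank of dualCode D is k
  have hfdd : Module.finrank F (dualCode D) = k := by
    have h4 := LinearMap.finrank_range_add_finrank_ker H.mulVecLin
    rw [show LinearMap.range H.mulVecLin = Submodule.span F (Set.range H.transpose)
        from Matrix.range_mulVecLin H] at h4
    have h5 : Module.finrank F (Fin n → F) = n := by simp
    have h6 : Module.finrank F (Submodule.span F (Set.range H.transpose)) = n - k := by
      rw [show Submodule.span F (Set.range H.transpose) = LinearMap.range H.mulVecLin
          from (Matrix.range_mulVecLin H).symm]
      exact hrankH
    rw [hdker.symm] at h4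
    rw [h5, h6] at h4
    omega
  -- C = dualCode D
  have hCsub : C ≤ dualCode D := by
    intro v hv w hw
    have := hw v hv
    simpa [mul_comm] using this
  have hCD : C = dualCode D :=
    Submodule.eq_of_le_of_finrank_le hCsub (by rw [hC, hfdd])
  -- image lemma
  have himg : ∀ x : Fin (n - k) → F, H.transpose.mulVec x = ∑ i, x i • H i := by
    intro x
    funext j
    simp [Matrix.mulVec, dotProduct, Matrix.transpose_apply,
      Finset.sum_apply, mul_comm]
  have hmemD : ∀ x : Fin (n - k) → F, H.transpose.mulVec x ∈ D := by
    intro x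
    rw [himg, ← hspan]
    exact Submodule.sum_mem _ fun i _ =>
      Submodule.smul_mem _ _ (Submodule.subset_span ⟨i, rfl⟩)
  -- kernel of (H * Hᵀ) ≃ C ⊓ D
  set K := LinearMap.ker (H * H.transpose).mulVecLin with hK
  have hkermem : ∀ x : Fin (n - k) → F,
      x ∈ K ↔ H.transpose.mulVec x ∈ C := by
    intro x
    rw [hK, LinearMap.mem_ker, Matrix.mulVecLin_apply, ← Matrix.mulVec_mulVec,
      hCD, hdker, LinearMap.mem_ker, Matrix.mulVecLin_apply]
  let f : K →ₗ[F] ↥(C ⊓ D) :=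
    LinearMap.codRestrict (C ⊓ D)
      (H.transpose.mulVecLin.comp K.subtype)
      (fun x => ⟨(hkermem x).mp x.2, hmemD x⟩)
  have hinj : Function.Injective f := by
    intro x y hxy
    have h1 : H.transpose.mulVec (x : Fin (n - k) → F)
        = H.transpose.mulVec (y : Fin (n - k) → F) := congrArg Subtype.val hxy
    have h2 : ∑ i, ((x : Fin (n - k) → F) i - (y : Fin (n - k) → F) i) • H i = 0 := by
      simp [sub_smul, Finset.sum_sub_distrib, ← himg, h1]
    have := Fintype.linearIndependent_iff.mp hind _ h2
    ext i
    have h3 := this i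
    exact sub_eq_zero.mp h3
  have hsurj : Function.Surjective f := by
    rintro ⟨v, hvC, hvD⟩
    rw [← hspan] at hvD
    obtain ⟨x, hx⟩ := (Submodule.mem_span_range_iff_exists_fun F).mp hvD
    have hxv : H.transpose.mulVec x = v := by rw [himg, hx]
    have hxK : x ∈ K := (hkermem x).mpr (hxv ▸ hvC)
    exact ⟨⟨x, hxK⟩, Subtype.ext hxv⟩
  have hker_eq : Module.finrank F K = Module.finrank F ↥(C ⊓ D) :=
    (LinearEquiv.ofBijective f ⟨hinj, hsurj⟩).finrank_eq
  -- rank-nullity for H * Hᵀ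
  have hmain := LinearMap.finrank_range_add_finrank_ker (H * H.transpose).mulVecLin
  rw [show Module.finrank F (Fin (n - k) → F) = n - k by simp, ← hK] at hmain
  have hrk : (H * H.transpose).rank
      = Module.finrank F (LinearMap.range (H * H.transpose).mulVecLin) := rfl
  have hle : Module.finrank F ↥(C ⊓ D) ≤ n - k := by rw [← hker_eq]; omega
  rw [hrk]
  omega
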